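/- Let M be a compact oriented Riemannian manifold with boundary, and let ω be a smooth closed k-form on M that is L²-orthogonal to the space of Neumann harmonic fields H^k_N(M) = {λ : dλ = 0, δλ = 0, n(λ) = 0}. If φ solves the Neumann problem Δφ = ω with n(φ) = 0 and n(dφ) = 0, then ω = d(δφ); in particular ω is exact with explicit potential δφ. -/
import Mathlib

open scoped InnerProductSpace

/-- (Abstract Neumann problem: explicit potential for an exact form.)
Let `A, B, C` be the spaces of smooth `(k−1)`-, `k`- and `(k+1)`-forms on a compact
oriented Riemannian manifold with boundary with their `L²` inner products, `d` the
exterior derivative (with `d ∘ d = 0`), `δ` the codifferential (with `δ ∘ δ = 0`), and `n`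
the normal component at the boundary.  Suppose Green's formula `⟪dα, β⟫ = ⟪α, δβ⟫` holds
whenever `nβ = 0`, and that `δ` preserves the vanishing of the normal component.
Let `ω` be a closed `k`-form that is `L²`-orthogonal to the Neumann harmonic fields
`H^k_N = {λ : dλ = 0, δλ = 0, nλ = 0}`.  If `φ` solves the Neumann problem
`Δφ = dδφ + δdφ = ω` with `nφ = 0`, `n(dφ) = 0`, then `ω = d(δφ)`; in particular `ω` is
exact with explicit potential `δφ`. -/
theorem neumann_problem_gives_exact_potential
    {A B C : Type*}
    [NormedAddCommGroup A] [InnerProductSpace ℝ A]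
    [NormedAddCommGroup B] [InnerProductSpace ℝ B]
    [NormedAddCommGroup C] [InnerProductSpace ℝ C]
    {NB NC : Type*} [AddCommGroup NB] [Module ℝ NB] [AddCommGroup NC] [Module ℝ NC]
    (dA : A →ₗ[ℝ] B) (dB : B →ₗ[ℝ] C)        -- exterior derivative
    (δB : B →ₗ[ℝ] A) (δC : C →ₗ[ℝ] B)        -- codifferential
    (nB : B →ₗ[ℝ] NB) (nC : C →ₗ[ℝ] NC)      -- normal component at the boundary
    (hdd : ∀ a : A, dB (dA a) = 0)
    (hδδ : ∀ c : C, δB (δC c) = 0)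
    (hGreenB : ∀ (α : A) (β : B), nB β = 0 → ⟪dA α, β⟫_ℝ = ⟪α, δB β⟫_ℝ)
    (hGreenC : ∀ (α : B) (β : C), nC β = 0 → ⟪dB α, β⟫_ℝ = ⟪α, δC β⟫_ℝ)
    (hnδ : ∀ c : C, nC c = 0 → nB (δC c) = 0)
    (ω : B)
    (hclosed : dB ω = 0)
    (horth : ∀ lam : B, dB lam = 0 → δB lam = 0 → nB lam = 0 → ⟪ω, lam⟫_ℝ = 0)
    (φ : B)
    (hNeumann₁ : nB φ = 0)
    (hNeumann₂ : nC (dB φ) = 0)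
    (hΔ : dA (δB φ) + δC (dB φ) = ω) :
    ω = dA (δB φ) := by
  set ψ := δC (dB φ) with hψ
  have hψeq : ψ = ω - dA (δB φ) := by rw [← hΔ]; abel
  have hnψ : nB ψ = 0 := hnδ _ hNeumann₂
  have hdψ : dB ψ = 0 := by
    rw [hψeq]; simp [hclosed, hdd]
  have hδψ : δB ψ = 0 := hδδ _
  have h1 : ⟪ω, ψ⟫_ℝ = 0 := horth ψ hdψ hδψ hnψ
  have h2 : ⟪dA (δB φ), ψ⟫_ℝ = 0 := by
    rw [hGreenB _ _ hnψ, hδψ, inner_zero_right]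
  have hz : ⟪ψ, ψ⟫_ℝ = 0 := by
    have : ⟪ψ, ψ⟫_ℝ = ⟪ω, ψ⟫_ℝ - ⟪dA (δB φ), ψ⟫_ℝ := by
      rw [← inner_sub_left, ← hψeq]
    rw [this, h1, h2, sub_zero]
  have : ψ = 0 := inner_self_eq_zero.mp hz
  rw [← hΔ, this, add_zero]
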